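/- arXiv:2402.02560 — 4 statements merged into one kernel-verified Lean document; each statement's English description precedes it below -/
import Mathlib

section
/- Let F ∈ L_t and G ∈ L_s be polynomial vector fields on ℝⁿ whose components are homogeneous of degrees t+1 and s+1 respectively, and set ℓ = (1+t)/(1+s). Then for all x ∈ ℝⁿ, ad(F)(G)(x) = (1/(1+t)) · ( (dG/dx)(x)(dF/dx)(x) − ℓ · (dF/dx)(x)(dG/dx)(x) ) · x. -/
open MvPolynomial


lemma X_mul_pderiv_monomial {n : ℕ} (j : Fin n) (m : Fin n →₀ ℕ) (a : ℝ) :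
    X j * pderiv j (monomial m a) = (m j) • monomial m a := by
  rw [pderiv_monomial]
  rcases Nat.eq_zero_or_pos (m j) with h | h
  · simp [h]
  · rw [X, monomial_mul]
    have : Finsupp.single j 1 + (m - Finsupp.single j 1) = m := by
      ext k
      rcases eq_or_ne k j with rfl | hk
      · simp; omega
      · simp [Finsupp.single_apply, Ne.symm hk]
    rw [this]
    simp [smul_monomial, mul_comm]

lemma euler {n d : ℕ} (p : MvPolynomial (Fin n) ℝ) (hp : p.IsHomogeneous d) :
    ∑ j, X j * pderiv j p = d • p := by
  conv_lhs => rw [p.as_sum]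
  simp only [map_sum, Finset.mul_sum]
  rw [Finset.sum_comm]
  conv_rhs => rw [p.as_sum]
  rw [Finset.smul_sum]
  refine Finset.sum_congr rfl fun m hm => ?_
  have hd : (∑ j, m j) = d := by
    have h1 := hp (mem_support_iff.mp hm)
    rw [← h1, Finsupp.weight_apply, Finsupp.sum]
    rw [Finset.sum_subset (Finset.subset_univ m.support)]
    · simp
    · intro x _ hx
      simp [Finsupp.notMem_support_iff.mp hx]
  calc ∑ j, X j * pderiv j (monomial m (coeff m p))
      = ∑ j, (m j) • monomial m (coeff m p) :=
        Finset.sum_congr rfl fun j _ => X_mul_pderiv_monomial j m _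
    _ = (∑ j, m j) • monomial m (coeff m p) := by rw [Finset.sum_smul]
    _ = d • monomial m (coeff m p) := by rw [hd]

lemma euler_eval {n d : ℕ} (p : MvPolynomial (Fin n) ℝ) (hp : p.IsHomogeneous d)
    (x : Fin n → ℝ) : ∑ j, x j * eval x (pderiv j p) = (d : ℝ) * eval x p := by
  have := congrArg (eval x) (euler p hp)
  simpa [Finset.mul_sum, eval_sum] using this


/-- The Lie bracket `[F,G](x) = (dG/dx)(x) F(x) − (dF/dx)(x) G(x)` of polynomial vector
fields on `ℝⁿ`, i.e. `ad(F)(G)`. -/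
noncomputable def bracket {n : ℕ} (F G : Fin n → MvPolynomial (Fin n) ℝ) :
    Fin n → MvPolynomial (Fin n) ℝ :=
  fun i => (∑ j, pderiv j (G i) * F j) - ∑ j, pderiv j (F i) * G j

/-- The Jacobian matrix of a polynomial vector field, evaluated at a point `x ∈ ℝⁿ`. -/
noncomputable def jacEval {n : ℕ} (F : Fin n → MvPolynomial (Fin n) ℝ) (x : Fin n → ℝ) :
    Matrix (Fin n) (Fin n) ℝ :=
  fun i j => eval x (pderiv j (F i))

/-- If `F ∈ L_t` and `G ∈ L_s` (components homogeneous of degrees `t+1`, `s+1`) and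
`ℓ = (1+t)/(1+s)`, then for all `x`,
`ad(F)(G)(x) = (1/(1+t)) ((dG/dx)(x)(dF/dx)(x) − ℓ (dF/dx)(x)(dG/dx)(x)) · x`. -/
theorem ad_formula {n : ℕ} (t s : ℕ) (F G : Fin n → MvPolynomial (Fin n) ℝ)
    (hF : ∀ i, (F i).IsHomogeneous (t + 1)) (hG : ∀ i, (G i).IsHomogeneous (s + 1)) :
    ∀ x : Fin n → ℝ,
      (fun i => eval x (bracket F G i)) =
        (1 / (1 + (t : ℝ))) •
          ((jacEval G x * jacEval F x
              - ((1 + (t : ℝ)) / (1 + (s : ℝ))) • (jacEval F x * jacEval G x)).mulVec x) := by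
  intro x
  have ht : (1 + (t : ℝ)) ≠ 0 := by positivity
  have hs : (1 + (s : ℝ)) ≠ 0 := by positivity
  have hEF : ∀ k, ∑ j, jacEval F x k j * x j = (1 + (t : ℝ)) * eval x (F k) := by
    intro k
    have h := euler_eval (F k) (hF k) x
    push_cast at h
    calc ∑ j, jacEval F x k j * x j = ∑ j, x j * eval x (pderiv j (F k)) :=
          Finset.sum_congr rfl fun j _ => mul_comm _ _
      _ = (1 + (t:ℝ)) * eval x (F k) := by rw [h]; ring
  have hEG : ∀ k, ∑ j, jacEval G x k j * x j = (1 + (s : ℝ)) * eval x (G k) := by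
    intro k
    have h := euler_eval (G k) (hG k) x
    push_cast at h
    calc ∑ j, jacEval G x k j * x j = ∑ j, x j * eval x (pderiv j (G k)) :=
          Finset.sum_congr rfl fun j _ => mul_comm _ _
      _ = (1 + (s:ℝ)) * eval x (G k) := by rw [h]; ring
  funext i
  have swap1 : ∑ j, (∑ k, jacEval G x i k * jacEval F x k j) * x j
      = (1 + (t:ℝ)) * ∑ k, jacEval G x i k * eval x (F k) := by
    simp only [Finset.sum_mul, mul_assoc]
    rw [Finset.sum_comm, Finset.mul_sum]
    exact Finset.sum_congr rfl fun k _ => by rw [← Finset.mul_sum, hEF k]; ring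
  have swap2 : ∑ j, (∑ k, jacEval F x i k * jacEval G x k j) * x j
      = (1 + (s:ℝ)) * ∑ k, jacEval F x i k * eval x (G k) := by
    simp only [Finset.sum_mul, mul_assoc]
    rw [Finset.sum_comm, Finset.mul_sum]
    exact Finset.sum_congr rfl fun k _ => by rw [← Finset.mul_sum, hEG k]; ring
  simp only [bracket, map_sub, eval_sum, eval_mul, Pi.smul_apply, Matrix.mulVec,
    dotProduct, Matrix.sub_apply, Matrix.smul_apply, Matrix.mul_apply,
    smul_eq_mul, sub_mul, mul_assoc]
  rw [Finset.sum_sub_distrib, ← Finset.mul_sum, swap1, swap2]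
  have e1 : ∀ k, eval x (pderiv k (G i)) = jacEval G x i k := fun k => rfl
  have e2 : ∀ k, eval x (pderiv k (F i)) = jacEval F x i k := fun k => rfl
  simp only [e1, e2]
  field_simp
end

section
/- Let F = F_0 + F_1 + ⋯ + F_N be a polynomial vector field on ℝⁿ with F_i ∈ L_i and F_0(x) = x (the identity vector field). Then every G_0 ∈ L_0 extends to a formal centralizer of F: there exists a sequence (G_i)_{i ≥ 1} with G_i ∈ L_i such that for every k ≥ 1, Σ_{i=0}^{k} [F_{k−i}, G_i] = 0 (where F_j := 0 for j > N); i.e. the formal power-series vector field G = Σ_{i ≥ 0} G_i satisfies [F, G] = 0. -/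
open MvPolynomial

lemma fc_degree_sum {n : ℕ} (s : Fin n →₀ ℕ) : s.degree = ∑ j : Fin n, s j := by
  classical
  rw [Finsupp.degree]
  exact Finset.sum_subset (Finset.subset_univ _)
    (fun x _ hx => Finsupp.notMem_support_iff.mp hx)

lemma fc_degree_single {n : ℕ} (j : Fin n) :
    (Finsupp.single j 1 : Fin n →₀ ℕ).degree = 1 := by
  simp [fc_degree_sum, Finsupp.single_apply]

lemma fc_pderiv_isHomog {n : ℕ} {p : MvPolynomial (Fin n) ℝ} {d : ℕ}
    (h : p.IsHomogeneous d) (j : Fin n) : (pderiv j p).IsHomogeneous (d - 1) := by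
  classical
  rw [p.as_sum, map_sum]
  refine MvPolynomial.IsHomogeneous.sum _ _ _ ?_
  intro s hs
  rw [pderiv_monomial]
  rcases Nat.eq_zero_or_pos (s j) with h0 | hpos
  · rw [h0]; simp only [Nat.cast_zero, mul_zero, monomial_zero]
    exact isHomogeneous_zero _ _ _
  · apply isHomogeneous_monomial
    have hds : s.degree = d := by
      have := h (mem_support_iff.mp hs)
      rw [Finsupp.degree_eq_weight_one]; exact this
    have hle : Finsupp.single j 1 ≤ s := Finsupp.single_le_iff.mpr hpos
    have hsub : (s - Finsupp.single j 1) + Finsupp.single j 1 = s :=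
      tsub_add_cancel_of_le hle
    have hadd : ∀ a b : Fin n →₀ ℕ, (a + b).degree = a.degree + b.degree := by
      intro a b; simp [fc_degree_sum, Finset.sum_add_distrib]
    have : (s - Finsupp.single j 1).degree + 1 = s.degree := by
      have := congrArg Finsupp.degree hsub
      rwa [hadd, fc_degree_single] at this
    omega

lemma fc_bracket_isHomog {n : ℕ} {F G : Fin n → MvPolynomial (Fin n) ℝ} {a b : ℕ}
    (hF : ∀ i, (F i).IsHomogeneous (a + 1)) (hG : ∀ i, (G i).IsHomogeneous (b + 1))
    (i : Fin n) : (bracket F G i).IsHomogeneous (a + b + 1) := by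
  apply MvPolynomial.IsHomogeneous.sub
  · refine MvPolynomial.IsHomogeneous.sum _ _ _ (fun j _ => ?_)
    have h1 := (fc_pderiv_isHomog (hG i) j).mul (hF j)
    have e : (b + 1 - 1) + (a + 1) = a + b + 1 := by omega
    rwa [e] at h1
  · refine MvPolynomial.IsHomogeneous.sum _ _ _ (fun j _ => ?_)
    have h1 := (fc_pderiv_isHomog (hF i) j).mul (hG j)
    have e : (a + 1 - 1) + (b + 1) = a + b + 1 := by omega
    rwa [e] at h1

lemma fc_euler {n : ℕ} {p : MvPolynomial (Fin n) ℝ} {d : ℕ}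
    (h : p.IsHomogeneous d) : ∑ j, pderiv j p * X j = d • p := by
  classical
  conv_lhs => rw [p.as_sum]
  conv_rhs => rw [p.as_sum]
  simp only [map_sum, Finset.sum_mul, Finset.smul_sum]
  rw [Finset.sum_comm]
  refine Finset.sum_congr rfl (fun s hs => ?_)
  have hds : s.degree = d := by
    have := h (mem_support_iff.mp hs)
    rw [Finsupp.degree_eq_weight_one]; exact this
  have key : ∀ j : Fin n,
      pderiv j (monomial s (coeff s p)) * X j = (s j) • monomial s (coeff s p) := by
    intro j
    rw [pderiv_monomial]
    rcases Nat.eq_zero_or_pos (s j) with h0 | hpos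
    · rw [h0]
      simp only [Nat.cast_zero, mul_zero, monomial_zero, zero_mul, zero_smul]
    · have hle : Finsupp.single j 1 ≤ s := Finsupp.single_le_iff.mpr hpos
      rw [X, monomial_mul, tsub_add_cancel_of_le hle, mul_one]
      rw [MvPolynomial.smul_monomial]
      congr 1
      rw [nsmul_eq_mul, mul_comm]
  rw [Finset.sum_congr rfl (fun j _ => key j)]
  rw [← Finset.sum_smul, ← fc_degree_sum, hds]

lemma fc_bracket_F0 {n : ℕ} {G : Fin n → MvPolynomial (Fin n) ℝ} {k : ℕ}
    (hG : ∀ i, (G i).IsHomogeneous (k + 1)) :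
    bracket (fun i => X i) G = fun i => k • G i := by
  classical
  funext i
  unfold bracket
  rw [fc_euler (hG i)]
  have h2 : (∑ j, pderiv j (X i : MvPolynomial (Fin n) ℝ) * G j) = G i := by
    rw [Finset.sum_eq_single i]
    · simp
    · intro j _ hj; rw [pderiv_X_of_ne (Ne.symm hj)]; ring
    · simp
  rw [h2, succ_nsmul]
  abel

noncomputable def fcG {n : ℕ} (F : ℕ → Fin n → MvPolynomial (Fin n) ℝ)
    (G0 : Fin n → MvPolynomial (Fin n) ℝ) : ℕ → Fin n → MvPolynomial (Fin n) ℝ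
  | 0 => G0
  | (k+1) => fun i => C (-((k : ℝ) + 1)⁻¹) *
      (∑ j ∈ (Finset.range (k+1)).attach,
        bracket (F (k + 1 - j.1)) (fcG F G0 j.1) i)
  decreasing_by exact Finset.mem_range.mp j.2

/-- Let `F = F_0 + F_1 + ⋯ + F_N` with `F_i ∈ L_i`, `F_k = 0` for `k > N` and
`F_0(x) = x` the identity vector field.  Then every `G_0 ∈ L_0` extends to a formal
centralizer of `F`: there exist `G_i ∈ L_i` (`i ≥ 1`) such that for every `k ≥ 1`,
`Σ_{i=0}^{k} [F_{k−i}, G_i] = 0`, i.e. `[F, Σᵢ Gᵢ] = 0` as a formal power-series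
vector field. -/
theorem formal_centralizer {n N : ℕ} (F : ℕ → Fin n → MvPolynomial (Fin n) ℝ)
    (hF0 : F 0 = fun i => X i)
    (hFhom : ∀ k i, (F k i).IsHomogeneous (k + 1))
    (hFtop : ∀ k, N < k → F k = 0)
    (G0 : Fin n → MvPolynomial (Fin n) ℝ) (hG0 : ∀ i, (G0 i).IsHomogeneous 1) :
    ∃ G : ℕ → Fin n → MvPolynomial (Fin n) ℝ,
      G 0 = G0 ∧ (∀ k i, (G k i).IsHomogeneous (k + 1)) ∧
      ∀ k, 1 ≤ k → ∑ i ∈ Finset.range (k + 1), bracket (F (k - i)) (G i) = 0 := by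
  classical
  have hGhom : ∀ k i, ((fcG F G0 k) i).IsHomogeneous (k + 1) := by
    intro k
    induction k using Nat.strong_induction_on with
    | _ k ih =>
      intro i
      match k with
      | 0 =>
        have : fcG F G0 0 = G0 := by rw [fcG]
        rw [this]; exact hG0 i
      | (m+1) =>
        show ((fcG F G0 (m+1)) i).IsHomogeneous (m + 2)
        rw [fcG]
        apply MvPolynomial.IsHomogeneous.C_mul
        refine MvPolynomial.IsHomogeneous.sum _ _ _ (fun j _ => ?_)
        have hj : j.1 < m + 1 := Finset.mem_range.mp j.2
        have hFj : ∀ l, (F (m + 1 - j.1) l).IsHomogeneous ((m + 1 - j.1) + 1) :=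
          fun l => hFhom _ l
        have hGj : ∀ l, ((fcG F G0 j.1) l).IsHomogeneous (j.1 + 1) := fun l => ih j.1 hj l
        have := fc_bracket_isHomog hFj hGj i
        have e : (m + 1 - j.1) + j.1 + 1 = m + 2 := by omega
        rwa [e] at this
  refine ⟨fcG F G0, by rw [fcG], hGhom, ?_⟩
  intro k hk
  obtain ⟨m, rfl⟩ : ∃ m, k = m + 1 := ⟨k - 1, by omega⟩
  rw [Finset.sum_range_succ]
  have hlast : m + 1 - (m + 1) = 0 := by omega
  rw [hlast, hF0, fc_bracket_F0 (hGhom (m+1))]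
  funext l
  simp only [Pi.add_apply, Finset.sum_apply, Pi.zero_apply]
  have hG1 : fcG F G0 (m+1) l = C (-((m : ℝ) + 1)⁻¹) *
      ∑ c ∈ Finset.range (m+1), bracket (F (m + 1 - c)) (fcG F G0 c) l := by
    rw [fcG]
    exact congrArg (fun t => C (-((m : ℝ) + 1)⁻¹) * t) (Finset.sum_attach (Finset.range (m+1)) (fun c => bracket (F (m + 1 - c)) (fcG F G0 c) l))
  rw [hG1, nsmul_eq_mul, ← mul_assoc]
  have hcoef : ((m + 1 : ℕ) : MvPolynomial (Fin n) ℝ) * C (-((m : ℝ) + 1)⁻¹) = -1 := by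
    rw [← MvPolynomial.C_eq_coe_nat, ← map_mul]
    have hc : ((m + 1 : ℕ) : ℝ) * (-((m : ℝ) + 1)⁻¹) = -1 := by
      have : ((m : ℝ) + 1) ≠ 0 := by positivity
      push_cast
      field_simp
    rw [hc]
    simp
  rw [hcoef]
  ring
end

section
/- Let g ∈ ℝ[x_1,…,x_n] be a homogeneous polynomial of degree s > 0 and let p ≥ 0 be an integer. If Σ_{i=1}^{n} (∂g/∂x_i) · x_i^{p+1} = 0, then g = 0. -/
open MvPolynomial

lemma coeff_pderiv_aux {n : ℕ} (i : Fin n) (f : MvPolynomial (Fin n) ℝ) (m : Fin n →₀ ℕ) :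
    coeff m (pderiv i f) = ((m i : ℝ) + 1) * coeff (m + Finsupp.single i 1) f := by
  induction f using MvPolynomial.induction_on' with
  | add f₁ f₂ ih1 ih2 => simp [ih1, ih2, mul_add]
  | monomial s a =>
    rw [pderiv_monomial, coeff_monomial, coeff_monomial]
    by_cases hcase : s = m + Finsupp.single i 1
    · subst hcase
      rw [add_tsub_cancel_right, if_pos rfl]
      simp only [Finsupp.add_apply, Finsupp.single_apply, if_pos rfl]
      push_cast
      ring
    · rw [if_neg hcase, mul_zero]
      split_ifs with h1
      · have hsi : s i = 0 := by
          by_contra hsi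
          apply hcase
          rw [← h1]
          ext k
          rcases eq_or_ne k i with rfl | hk
          · simp [Nat.sub_add_cancel (Nat.one_le_iff_ne_zero.mpr hsi)]
          · simp [Finsupp.single_apply, Ne.symm hk]
        simp [hsi]
      · rfl

/-- If `g ∈ ℝ[x_1,…,x_n]` is homogeneous of degree `s > 0` and
`Σ_{i=1}^{n} (∂g/∂x_i) · x_i^{p+1} = 0`, then `g = 0`. -/
theorem homogeneous_vanish {n : ℕ} (g : MvPolynomial (Fin n) ℝ) (s p : ℕ) (hs : 0 < s)
    (hg : g.IsHomogeneous s)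
    (h : ∑ i, pderiv i g * X i ^ (p + 1) = 0) :
    g = 0 := by
  classical
  by_contra hne
  have hsupp : g.support.Nonempty := by
    rwa [Finset.nonempty_iff_ne_empty, Ne, MvPolynomial.support_eq_empty]
  set F : (Fin n →₀ ℕ) → ℕ := fun d => d.support.sup d with hF
  obtain ⟨d, hd, hdmax⟩ := Finset.exists_mem_eq_sup g.support hsupp F
  -- degree of d is s, so d.support is nonempty
  have hdeg : d.degree = s := by
    rw [Finsupp.degree_eq_weight_one]
    exact hg (MvPolynomial.mem_support_iff.mp hd)
  have hdsupp : d.support.Nonempty := by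
    rw [Finsupp.support_nonempty_iff]
    intro h0
    rw [h0, map_zero] at hdeg
    omega
  obtain ⟨i, hi, himax⟩ := Finset.exists_mem_eq_sup d.support hdsupp d
  set M : ℕ := d i with hM
  have hMpos : 0 < M := by
    have := Finsupp.mem_support_iff.mp hi
    omega
  -- every exponent in every monomial of g is at most M
  have hbound : ∀ d' ∈ g.support, ∀ j, d' j ≤ M := by
    intro d' hd' j
    rcases Nat.eq_zero_or_pos (d' j) with h0 | h0
    · omega
    have hj : j ∈ d'.support := Finsupp.mem_support_iff.mpr (by omega)
    calc d' j ≤ F d' := Finset.le_sup hj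
      _ ≤ g.support.sup F := Finset.le_sup hd'
      _ = F d := hdmax
      _ = M := by simpa [hF, hM] using himax
  set m : Fin n →₀ ℕ := d + Finsupp.single i p with hm
  -- the coefficient of m in each summand
  set a : Fin n → ℕ := fun j =>
    if Finsupp.single j (p + 1) ≤ m ∧ m - Finsupp.single j p = d then m j - p else 0 with ha
  have hterm : ∀ j, coeff m (pderiv j g * X j ^ (p + 1)) = (a j : ℝ) * coeff d g := by
    intro j
    rw [X_pow_eq_monomial, coeff_mul_monomial']
    by_cases hle : Finsupp.single j (p + 1) ≤ m
    · have hmj : p + 1 ≤ m j := by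
        have := Finsupp.le_def.mp hle j
        simpa using this
      rw [if_pos hle, mul_one, coeff_pderiv_aux]
      have harg : m - Finsupp.single j (p + 1) + Finsupp.single j 1 = m - Finsupp.single j p := by
        ext k
        rcases eq_or_ne k j with rfl | hk
        · simp only [Finsupp.add_apply, Finsupp.tsub_apply, Finsupp.single_eq_same]
          omega
        · simp [Finsupp.single_apply, Ne.symm hk]
      have hcoef : (m - Finsupp.single j (p + 1)) j = m j - (p + 1) := by
        simp [Finsupp.single_apply]
      rw [harg, hcoef]
      by_cases heq : m - Finsupp.single j p = d
      · have hcond : Finsupp.single j (p + 1) ≤ m ∧ m - Finsupp.single j p = d := ⟨hle, heq⟩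
        rw [heq]
        simp only [ha, if_pos hcond]
        congr 1
        rw [Nat.cast_sub hmj, Nat.cast_sub (show p ≤ m j by omega)]
        push_cast
        ring
      · have hcond : ¬(Finsupp.single j (p + 1) ≤ m ∧ m - Finsupp.single j p = d) := by
          tauto
        simp only [ha, if_neg hcond]
        have hzero : coeff (m - Finsupp.single j p) g = 0 := by
          by_contra hz
          have hmem : m - Finsupp.single j p ∈ g.support := MvPolynomial.mem_support_iff.mpr hz
          have hb := hbound _ hmem i
          rcases eq_or_ne j i with rfl | hji
          · -- then m - single j p = d
            apply heq
            ext k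
            rcases eq_or_ne k j with rfl | hk
            · simp only [hm, Finsupp.tsub_apply, Finsupp.add_apply, Finsupp.single_apply,
                if_pos rfl]
              omega
            · simp [hm, Finsupp.single_apply, Ne.symm hk]
          · have : (m - Finsupp.single j p) i = M + p := by
              simp [hm, Finsupp.single_apply, hji, Ne.symm hji, hM]
            rw [this] at hb
            have hp0 : p = 0 := by omega
            apply heq
            subst hp0
            ext k
            simp [hm]
          -- done
        rw [hzero, Nat.cast_zero, zero_mul, mul_zero]
    · have hcond : ¬(Finsupp.single j (p + 1) ≤ m ∧ m - Finsupp.single j p = d) := by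
        tauto
      simp only [ha, if_neg hle, if_neg hcond, Nat.cast_zero, zero_mul]
  -- sum up
  have hsum : (0 : ℝ) = (↑(∑ j, a j) : ℝ) * coeff d g := by
    calc (0 : ℝ) = coeff m (∑ j, pderiv j g * X j ^ (p + 1)) := by rw [h]; simp
      _ = ∑ j, coeff m (pderiv j g * X j ^ (p + 1)) := by rw [MvPolynomial.coeff_sum]
      _ = ∑ j, (a j : ℝ) * coeff d g := by simp_rw [hterm]
      _ = (↑(∑ j, a j) : ℝ) * coeff d g := by rw [← Finset.sum_mul]; push_cast; ring
  have hai : a i = M := by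
    have hmi : m i = M + p := by simp [hm, hM]
    have h1 : Finsupp.single i (p + 1) ≤ m := by
      rw [Finsupp.single_le_iff, hmi]
      omega
    have h2 : m - Finsupp.single i p = d := by
      ext k
      rcases eq_or_ne k i with rfl | hk
      · simp only [hm, Finsupp.tsub_apply, Finsupp.add_apply, Finsupp.single_apply, if_pos rfl]
        omega
      · simp [hm, Finsupp.single_apply, Ne.symm hk]
    have hcond : Finsupp.single i (p + 1) ≤ m ∧ m - Finsupp.single i p = d := ⟨h1, h2⟩
    simp only [ha, if_pos hcond, hmi]
    omega
  have hapos : 0 < ∑ j, a j := by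
    calc 0 < M := hMpos
      _ = a i := hai.symm
      _ ≤ ∑ j, a j := Finset.single_le_sum (fun j _ => Nat.zero_le _) (Finset.mem_univ i)
  have hcd : coeff d g ≠ 0 := MvPolynomial.mem_support_iff.mp hd
  have : (↑(∑ j, a j) : ℝ) * coeff d g ≠ 0 :=
    mul_ne_zero (Nat.cast_ne_zero.mpr (by omega)) hcd
  exact this hsum.symm
end

section
/- Let p ≥ 1 and let F_p be the vector field on ℝⁿ given by F_p(x) = (1/(p+1)) · (x_1^{p+1}, x_2^{p+1}, …, x_n^{p+1}). Then for every integer j ≥ 0 with j ≠ p, the map ad(F_p)|_{L_j} : L_j → L_{p+j} is injective; i.e. if G ∈ L_j and [F_p, G] = 0 then G = 0. -/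
open MvPolynomial

lemma coeff_pderiv {n : ℕ} (k : Fin n) (H : MvPolynomial (Fin n) ℝ) (m : Fin n →₀ ℕ) :
    coeff m (pderiv k H) = ((m k : ℝ) + 1) * coeff (m + Finsupp.single k 1) H := by
  induction H using MvPolynomial.induction_on' with
  | add f g hf hg => simp [hf, hg, mul_add]
  | monomial s a =>
    rw [pderiv_monomial, coeff_monomial, coeff_monomial]
    by_cases h : s = m + Finsupp.single k 1
    · subst h
      have h1 : (m + Finsupp.single k 1) - Finsupp.single k 1 = m := by
        ext x
        rw [Finsupp.tsub_apply, Finsupp.add_apply]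
        omega
      have h2 : ((m + Finsupp.single k 1 : Fin n →₀ ℕ)) k = m k + 1 := by
        rw [Finsupp.add_apply, Finsupp.single_eq_same]
      rw [if_pos h1, h2]
      simp only [if_pos trivial, if_true]
      push_cast; ring
    · rw [if_neg h, mul_zero]
      by_cases h2 : s - Finsupp.single k 1 = m
      · rw [if_pos h2]
        have hsk : s k = 0 := by
          by_contra hsk
          apply h
          ext x
          have hx2 := DFunLike.congr_fun h2 x
          rw [Finsupp.tsub_apply] at hx2
          rw [Finsupp.add_apply]
          by_cases hx : x = k
          · subst hx
            simp only [Finsupp.single_eq_same] at *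
            omega
          · simp only [Finsupp.single_eq_of_ne' (Ne.symm hx)] at *
            omega
        simp [hsk]
      · rw [if_neg h2]


/-- For `p ≥ 1` and `F_p(x) = (1/(p+1)) (x_1^{p+1}, …, x_n^{p+1})`, the map
`ad(F_p)|_{L_j} : L_j → L_{p+j}` is injective whenever `j ≠ p`: if `G ∈ L_j` and
`[F_p, G] = 0` then `G = 0`. -/
theorem ad_Fp_injective {n : ℕ} (p : ℕ) (hp : 1 ≤ p) (j : ℕ) (hj : j ≠ p)
    (G : Fin n → MvPolynomial (Fin n) ℝ)
    (hG : ∀ i, (G i).IsHomogeneous (j + 1))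
    (hker : bracket (fun i => C (((p : ℝ) + 1)⁻¹) * X i ^ (p + 1)) G = 0) :
    G = 0 := by
  have hcne : ((p : ℝ) + 1) ≠ 0 := by positivity
  funext i
  show G i = 0
  by_contra hH
  set H := G i with hHdef
  -- derivative of the field components
  have hder : ∀ a b : Fin n,
      pderiv b (C (((p : ℝ) + 1)⁻¹) * X a ^ (p + 1) : MvPolynomial (Fin n) ℝ)
        = if b = a then X a ^ p else 0 := by
    intro a b
    rw [pderiv_C_mul, pderiv_pow]
    by_cases h : b = a
    · subst h
      rw [pderiv_X_self, mul_one, if_pos rfl]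
      have hcast : ((p + 1 : ℕ) : MvPolynomial (Fin n) ℝ) = C ((p : ℝ) + 1) := by
        rw [C_add, C_1, C_eq_coe_nat]
        push_cast
        rfl
      rw [hcast, Nat.add_sub_cancel, ← mul_assoc, ← C_mul, inv_mul_cancel₀ hcne, C_1, one_mul]
    · rw [pderiv_X_of_ne (fun hab => h hab.symm), if_neg h, mul_zero, mul_zero]
  -- the kernel equation for component i
  have heq : (∑ l, pderiv l H * (C (((p : ℝ) + 1)⁻¹) * X l ^ (p + 1))) = X i ^ p * H := by
    have h0 := congrFun hker i
    simp only [bracket, Pi.zero_apply, sub_eq_zero] at h0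
    rw [← hHdef] at h0
    rw [h0]
    have : ∀ l : Fin n, pderiv l (C (((p : ℝ) + 1)⁻¹) * X i ^ (p + 1)) * G l
        = (if l = i then X i ^ p else 0) * G l := by
      intro l; rw [hder]
    simp only [this, ite_mul, zero_mul]
    rw [Finset.sum_ite_eq' Finset.univ i (fun l => X i ^ p * G l)]
    simp [hHdef]
  -- key coefficient computation
  have key : ∀ k : Fin n, ∀ m ∈ H.support, (∀ m' ∈ H.support, m' k ≤ m k) →
      (m k : ℝ) * ((p : ℝ) + 1)⁻¹ = if k = i then 1 else 0 := by
    intro k m hm hmax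
    set t : Fin n →₀ ℕ := m + Finsupp.single k p with ht
    have htapp : ∀ x, t x = m x + if x = k then p else 0 := by
      intro x
      rw [ht, Finsupp.add_apply, Finsupp.single_apply]
      simp [eq_comm]
    have hcoeff := congrArg (coeff t) heq
    rw [coeff_sum] at hcoeff
    -- RHS
    have hrhs : coeff t (X i ^ p * H) = (if k = i then 1 else 0) * coeff m H := by
      rw [X_pow_eq_monomial, coeff_monomial_mul']
      by_cases hki : k = i
      · subst hki
        have hle : Finsupp.single k p ≤ t := by
          rw [Finsupp.single_le_iff, htapp]; simp
        rw [if_pos hle, if_pos rfl, one_mul, one_mul]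
        congr 1
        ext x
        rw [Finsupp.tsub_apply, htapp, Finsupp.single_apply]
        by_cases hx : x = k
        · subst hx; simp
        · have hkx : ¬ k = x := fun h => hx h.symm
          simp [hx, hkx]
      · rw [if_neg hki]
        by_cases hle : Finsupp.single i p ≤ t
        · rw [if_pos hle, one_mul, zero_mul]
          have hk' : (t - Finsupp.single i p) k = m k + p := by
            rw [Finsupp.tsub_apply, htapp, Finsupp.single_apply]
            have : ¬ (i = k) := fun h => hki h.symm
            simp [this]
          have : coeff (t - Finsupp.single i p) H = 0 := by
            by_contra hne
            have := hmax _ (mem_support_iff.mpr hne)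
            omega
          exact this
        · rw [if_neg hle, zero_mul]
    -- LHS
    have hlhs : ∑ l, coeff t (pderiv l H * (C (((p : ℝ) + 1)⁻¹) * X l ^ (p + 1)))
        = (m k : ℝ) * ((p : ℝ) + 1)⁻¹ * coeff m H := by
      have hmono : ∀ l : Fin n, (C (((p : ℝ) + 1)⁻¹) * X l ^ (p + 1) : MvPolynomial (Fin n) ℝ)
          = monomial (Finsupp.single l (p + 1)) (((p : ℝ) + 1)⁻¹) := by
        intro l
        rw [X_pow_eq_monomial, C_mul_monomial, mul_one]
      rw [Finset.sum_eq_single k]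
      · rw [hmono, coeff_mul_monomial']
        by_cases hmk : m k = 0
        · have hnle : ¬ Finsupp.single k (p + 1) ≤ t := by
            rw [Finsupp.single_le_iff, htapp]
            simp [hmk]
          rw [if_neg hnle, hmk]
          simp
        · have hle : Finsupp.single k (p + 1) ≤ t := by
            rw [Finsupp.single_le_iff, htapp]
            simp; omega
          rw [if_pos hle]
          have hu : t - Finsupp.single k (p + 1) = m - Finsupp.single k 1 := by
            ext x
            rw [Finsupp.tsub_apply, Finsupp.tsub_apply, htapp, Finsupp.single_apply,
              Finsupp.single_apply]
            by_cases hx : x = k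
            · subst hx; simp; omega
            · have hkx : ¬ k = x := fun h => hx h.symm
              simp [hx, hkx]
          rw [hu, coeff_pderiv]
          have h1 : (m - Finsupp.single k 1) + Finsupp.single k 1 = m := by
            ext x
            rw [Finsupp.add_apply, Finsupp.tsub_apply, Finsupp.single_apply]
            by_cases hx : k = x
            · subst hx; simp; omega
            · simp [hx]
          have h2 : ((m - Finsupp.single k 1 : Fin n →₀ ℕ)) k = m k - 1 := by
            rw [Finsupp.tsub_apply, Finsupp.single_eq_same]
          rw [h1, h2]
          have : ((m k - 1 : ℕ) : ℝ) + 1 = (m k : ℝ) := by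
            have : 1 ≤ m k := Nat.one_le_iff_ne_zero.mpr hmk
            push_cast [this]
            ring
          rw [this]
          ring
      · intro l _ hlk
        rw [hmono, coeff_mul_monomial']
        by_cases hle : Finsupp.single l (p + 1) ≤ t
        · rw [if_pos hle, coeff_pderiv]
          have hk' : ((t - Finsupp.single l (p + 1) + Finsupp.single l 1 : Fin n →₀ ℕ)) k
              = m k + p := by
            rw [Finsupp.add_apply, Finsupp.tsub_apply, htapp, Finsupp.single_apply,
              Finsupp.single_apply]
            have : ¬ (l = k) := hlk
            simp [this]
          have : coeff (t - Finsupp.single l (p + 1) + Finsupp.single l 1) H = 0 := by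
            by_contra hne
            have := hmax _ (mem_support_iff.mpr hne)
            omega
          rw [this]
          ring
        · rw [if_neg hle]
      · intro hk
        exact absurd (Finset.mem_univ k) hk
    rw [hlhs, hrhs] at hcoeff
    have hcm : coeff m H ≠ 0 := mem_support_iff.mp hm
    exact mul_right_cancel₀ hcm hcoeff
  -- support is nonempty
  have hne : H.support.Nonempty := by
    rw [Finset.nonempty_iff_ne_empty]
    intro h
    exact hH (support_eq_empty.mp h)
  -- all coordinates k ≠ i vanish on the support
  have hzero : ∀ k : Fin n, k ≠ i → ∀ m ∈ H.support, m k = 0 := by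
    intro k hk
    obtain ⟨m, hm, hmax⟩ := H.support.exists_max_image (fun m => m k) hne
    have hkey := key k m hm hmax
    rw [if_neg hk] at hkey
    have hmk : m k = 0 := by
      rcases mul_eq_zero.mp hkey with h | h
      · exact_mod_cast h
      · exact absurd h (inv_ne_zero hcne)
    intro m' hm'
    have := hmax m' hm'
    omega
  -- the max-in-i monomial
  obtain ⟨m, hm, hmax⟩ := H.support.exists_max_image (fun m => m i) hne
  have hkey := key i m hm hmax
  rw [if_pos rfl] at hkey
  have hmi : m i = p + 1 := by
    have : (m i : ℝ) = (p : ℝ) + 1 := by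
      field_simp at hkey
      linarith [hkey]
    exact_mod_cast this
  have hmeq : m = Finsupp.single i (p + 1) := by
    ext x
    rw [Finsupp.single_apply]
    by_cases hx : x = i
    · subst hx; simp [hmi]
    · rw [if_neg (fun h => hx h.symm)]
      exact hzero x hx m hm
  have hhom := (hG i) (mem_support_iff.mp hm)
  rw [hmeq] at hhom
  rw [show (Finsupp.weight 1 : (Fin n →₀ ℕ) →+ ℕ) = Finsupp.degree from
    (Finsupp.degree_eq_weight_one).symm] at hhom
  have hdeg : Finsupp.degree (Finsupp.single i (p + 1)) = p + 1 := by
    rw [Finsupp.degree_apply, Finsupp.support_single_ne_zero _ (by omega : p + 1 ≠ 0)]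
    rw [Finset.sum_singleton, Finsupp.single_eq_same]
  rw [hdeg] at hhom
  omega
end
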